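/- arXiv:2009.06106 — 3 statements merged into one kernel-verified Lean document; each statement's English description precedes it below -/
import Mathlib

section
/- Let x be strictly feasible for Ax ≥ b, let δ_x = −H(x)⁻¹∇f_t(x) be the Newton step for f_t(x) = t·cᵀx − Σᵢ ln(aᵢᵀx − bᵢ), and suppose x + δ_x is also strictly feasible with H(x + δ_x) invertible. Then ‖∇f_t(x + δ_x)‖_{H(x+δ_x)⁻¹} ≤ ‖∇f_t(x)‖_{H(x)⁻¹}². -/
open Matrix

/-- The local norm `‖v‖_M = √(vᵀ M v)`. -/
noncomputable def mnorm {n : ℕ} (M : Matrix (Fin n) (Fin n) ℝ) (v : Fin n → ℝ) : ℝ :=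
  Real.sqrt (v ⬝ᵥ M.mulVec v)

/-- The barrier Hessian `H(x) = Σᵢ aᵢaᵢᵀ/sᵢ(x)²`. -/
noncomputable def barrierHess {m n : ℕ} (A : Matrix (Fin m) (Fin n) ℝ) (b : Fin m → ℝ)
    (x : Fin n → ℝ) : Matrix (Fin n) (Fin n) ℝ :=
  ∑ i, ((A.mulVec x i - b i) ^ 2)⁻¹ • vecMulVec (fun j => A i j) (fun j => A i j)

/-- The gradient `∇f_t(x) = t·c − Σᵢ aᵢ/sᵢ(x)` of the penalized objective. -/
noncomputable def penGrad {m n : ℕ} (A : Matrix (Fin m) (Fin n) ℝ) (b : Fin m → ℝ)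
    (c : Fin n → ℝ) (t : ℝ) (x : Fin n → ℝ) : Fin n → ℝ :=
  fun j => t * c j - ∑ i, A i j / (A.mulVec x i - b i)

lemma hess_mulVec {m n : ℕ} (A : Matrix (Fin m) (Fin n) ℝ) (b : Fin m → ℝ)
    (y u : Fin n → ℝ) (j : Fin n) :
    (barrierHess A b y).mulVec u j
      = ∑ i, ((A.mulVec y i - b i) ^ 2)⁻¹ * ((∑ k, A i k * u k) * A i j) := by
  simp only [barrierHess, mulVec, dotProduct, Finset.sum_apply, Matrix.sum_apply,
    Matrix.smul_apply, vecMulVec_apply, smul_eq_mul, Finset.sum_mul, Finset.mul_sum]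
  rw [Finset.sum_comm]
  exact Finset.sum_congr rfl fun i _ => Finset.sum_congr rfl fun k _ => by ring

lemma hess_quad {m n : ℕ} (A : Matrix (Fin m) (Fin n) ℝ) (b : Fin m → ℝ)
    (y u : Fin n → ℝ) :
    u ⬝ᵥ (barrierHess A b y).mulVec u
      = ∑ i, ((A.mulVec y i - b i) ^ 2)⁻¹ * (∑ k, A i k * u k) ^ 2 := by
  simp only [dotProduct, hess_mulVec, Finset.mul_sum]
  rw [Finset.sum_comm]
  refine Finset.sum_congr rfl fun i _ => ?_
  have : ∀ x, u x * (((A.mulVec y i - b i) ^ 2)⁻¹ * ((∑ k, A i k * u k) * A i x))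
      = (((A.mulVec y i - b i) ^ 2)⁻¹ * (∑ k, A i k * u k)) * (A i x * u x) := by
    intro x; ring
  simp only [this]
  rw [← Finset.mul_sum, sq]
  ring

/-- Quadratic convergence of one Newton step for the potential
`Φ_t(x) = ‖∇f_t(x)‖_{H(x)⁻¹}`: if `x` is strictly feasible,
`δ_x = −H(x)⁻¹∇f_t(x)` and `x + δ_x` is also strictly feasible with invertible
Hessian, then `Φ_t(x + δ_x) ≤ Φ_t(x)²`. -/
theorem newton_quadratic_convergence {m n : ℕ} (A : Matrix (Fin m) (Fin n) ℝ)
    (b : Fin m → ℝ) (c : Fin n → ℝ) (t : ℝ) (ht : 0 < t) (x : Fin n → ℝ)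
    (hfeas : ∀ i, b i < A.mulVec x i)
    (hHx : (barrierHess A b x).PosDef)
    (δ : Fin n → ℝ) (hδ : δ = -(barrierHess A b x)⁻¹.mulVec (penGrad A b c t x))
    (hfeas' : ∀ i, b i < A.mulVec (x + δ) i)
    (hHx' : (barrierHess A b (x + δ)).PosDef) :
    mnorm (barrierHess A b (x + δ))⁻¹ (penGrad A b c t (x + δ)) ≤
      (mnorm (barrierHess A b x)⁻¹ (penGrad A b c t x)) ^ 2 := by
  set H := barrierHess A b x with hH
  set H' := barrierHess A b (x + δ) with hH'
  set g := penGrad A b c t x with hg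
  set v := penGrad A b c t (x + δ) with hvdef
  set s : Fin m → ℝ := fun i => A.mulVec x i - b i with hs
  set s' : Fin m → ℝ := fun i => A.mulVec (x + δ) i - b i with hs'
  set d : Fin m → ℝ := fun i => A.mulVec δ i with hd
  have hs_pos : ∀ i, 0 < s i := fun i => sub_pos.2 (hfeas i)
  have hs'_pos : ∀ i, 0 < s' i := fun i => sub_pos.2 (hfeas' i)
  have hs_ne : ∀ i, s i ≠ 0 := fun i => (hs_pos i).ne'
  have hs'_ne : ∀ i, s' i ≠ 0 := fun i => (hs'_pos i).ne'
  have hss' : ∀ i, s' i = s i + d i := by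
    intro i; simp [hs, hs', hd, Matrix.mulVec_add]; ring
  have hNewton : H.mulVec δ = -g := by
    rw [hδ, Matrix.mulVec_neg, Matrix.mulVec_mulVec,
      Matrix.mul_nonsing_inv _ hHx.det_pos.ne'.isUnit, Matrix.one_mulVec]
  have hdi : ∀ i, d i = ∑ k, A i k * δ k := fun i => rfl
  have hgj : ∀ j, g j = -∑ i, (s i ^ 2)⁻¹ * (d i * A i j) := by
    intro j
    have := congrFun hNewton j
    rw [hess_mulVec] at this
    simp only [Pi.neg_apply] at this
    rw [← neg_eq_iff_eq_neg] at this
    rw [← this]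
    simp [hdi]
    rfl
  have hvj : ∀ j, v j = -∑ i, d i ^ 2 / (s i ^ 2 * s' i) * A i j := by
    intro j
    have hv1 : v j = g j + ∑ i, (A i j / s i - A i j / s' i) := by
      simp [hvdef, hg, penGrad, hs, hs', Finset.sum_sub_distrib]
    rw [hv1, hgj j, neg_add_eq_sub, ← Finset.sum_sub_distrib, ← Finset.sum_neg_distrib]
    refine Finset.sum_congr rfl fun i _ => ?_
    have h1 : s i ≠ 0 := hs_ne i
    have h2 : s' i ≠ 0 := hs'_ne i
    rw [hss' i] at h2 ⊢
    field_simp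
    ring
  set u : Fin n → ℝ := (H'⁻¹).mulVec v with hu
  set w : ℝ := v ⬝ᵥ u with hw
  have hw0 : 0 ≤ w := by
    have := hHx'.inv.posSemidef.dotProduct_mulVec_nonneg v
    simpa [hw, hu] using this
  have hH'u : H'.mulVec u = v := by
    rw [hu, Matrix.mulVec_mulVec, Matrix.mul_nonsing_inv _ hHx'.det_pos.ne'.isUnit,
      Matrix.one_mulVec]
  have hquad : ∑ i, (s' i ^ 2)⁻¹ * (∑ k, A i k * u k) ^ 2 = w := by
    rw [← hess_quad A b (x + δ) u, hH'u, dotProduct_comm]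
  set e : Fin m → ℝ := fun i => ∑ k, A i k * u k with he
  set q : Fin m → ℝ := fun i => d i ^ 2 / s i ^ 2 with hq
  have hq0 : ∀ i ∈ Finset.univ, (0:ℝ) ≤ q i := fun i _ =>
    div_nonneg (sq_nonneg _) (sq_nonneg _)
  set K : ℝ := ∑ i, q i with hK
  have hK0 : 0 ≤ K := Finset.sum_nonneg hq0
  have hvu : w = -∑ i, d i ^ 2 / (s i ^ 2 * s' i) * e i := by
    rw [hw, dotProduct]
    simp only [hvj, neg_mul, Finset.sum_neg_distrib, Finset.sum_mul]
    rw [Finset.sum_comm]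
    refine congrArg Neg.neg (Finset.sum_congr rfl fun i _ => ?_)
    rw [he, Finset.mul_sum]
    exact Finset.sum_congr rfl fun k _ => by ring
  have hCS : w ^ 2 ≤ K ^ 2 * w := by
    have h1 : w ^ 2 = (∑ i, (s' i * (d i ^ 2 / (s i ^ 2 * s' i))) * (e i / s' i)) ^ 2 := by
      rw [hvu, neg_sq]
      congr 1
      refine Finset.sum_congr rfl fun i _ => ?_
      have h2 : s' i ≠ 0 := hs'_ne i
      rw [mul_comm (s' i) (d i ^ 2 / (s i ^ 2 * s' i)), mul_assoc,
        mul_comm (s' i) (e i / s' i), div_mul_cancel₀ _ h2]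
    have h2 := Finset.sum_mul_sq_le_sq_mul_sq Finset.univ
      (fun i => s' i * (d i ^ 2 / (s i ^ 2 * s' i))) (fun i => e i / s' i)
    have h3 : ∑ i, (s' i * (d i ^ 2 / (s i ^ 2 * s' i))) ^ 2 = ∑ i, q i ^ 2 := by
      refine Finset.sum_congr rfl fun i _ => ?_
      have hA : s' i ≠ 0 := hs'_ne i
      have hB : s i ≠ 0 := hs_ne i
      rw [hq]
      field_simp
    have h4 : ∑ i, (e i / s' i) ^ 2 = w := by
      rw [← hquad]
      refine Finset.sum_congr rfl fun i _ => ?_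
      rw [div_pow, div_eq_inv_mul, he]
    have h5 : ∑ i, q i ^ 2 ≤ K ^ 2 := Finset.sum_sq_le_sq_sum_of_nonneg hq0
    calc w ^ 2 = (∑ i, (s' i * (d i ^ 2 / (s i ^ 2 * s' i))) * (e i / s' i)) ^ 2 := h1
      _ ≤ (∑ i, (s' i * (d i ^ 2 / (s i ^ 2 * s' i))) ^ 2) * ∑ i, (e i / s' i) ^ 2 := h2
      _ = (∑ i, q i ^ 2) * w := by rw [h3, h4]
      _ ≤ K ^ 2 * w := mul_le_mul_of_nonneg_right h5 hw0
  have hsqrtw : Real.sqrt w ≤ K := by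
    rcases eq_or_lt_of_le hw0 with h | h
    · rw [← h]; simpa using hK0
    · have hwK : w ≤ K ^ 2 := by nlinarith
      calc Real.sqrt w ≤ Real.sqrt (K ^ 2) := Real.sqrt_le_sqrt hwK
        _ = K := by rw [Real.sqrt_sq hK0]
  have hKH : K = δ ⬝ᵥ H.mulVec δ := by
    rw [hH, hess_quad, hK]
    refine Finset.sum_congr rfl fun i _ => ?_
    show d i ^ 2 / s i ^ 2 = (s i ^ 2)⁻¹ * (∑ k, A i k * δ k) ^ 2
    rw [← hdi i, div_eq_mul_inv, mul_comm]
  have hKg : K = g ⬝ᵥ H⁻¹.mulVec g := by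
    rw [hKH, hNewton, dotProduct_neg, hδ, neg_dotProduct, neg_neg, dotProduct_comm]
  have hgK0 : 0 ≤ g ⬝ᵥ H⁻¹.mulVec g := hKg ▸ hK0
  show Real.sqrt (v ⬝ᵥ H'⁻¹.mulVec v) ≤ (Real.sqrt (g ⬝ᵥ H⁻¹.mulVec g)) ^ 2
  rw [Real.sq_sqrt hgK0, ← hKg]
  exact hsqrtw
end

section
/- Let A be a symmetric positive definite matrix, δ ∈ (0, 1/2), and P a symmetric matrix with (1−δ)A ⪯ P ⪯ (1+δ)A. Then P is positive definite and for every x ∈ ℝⁿ, ‖P⁻¹Ax − x‖_A ≤ 2δ·‖x‖_A. -/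
open Matrix

/-- Loewner order `A ⪯ B`. -/
def PSDle {n : ℕ} (A B : Matrix (Fin n) (Fin n) ℝ) : Prop := (B - A).PosSemidef

private lemma isSymm_to_isHermitian {n : ℕ} {M : Matrix (Fin n) (Fin n) ℝ}
    (h : M.IsSymm) : M.IsHermitian := by
  unfold Matrix.IsHermitian
  ext i j
  simp only [conjTranspose_apply, star_trivial]
  exact congrFun (congrFun h i) j

private lemma symm_dot {n : ℕ} {M : Matrix (Fin n) (Fin n) ℝ} (h : M.IsSymm)
    (u v : Fin n → ℝ) : u ⬝ᵥ M.mulVec v = v ⬝ᵥ M.mulVec u := by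
  rw [dotProduct_mulVec, ← mulVec_transpose, h.eq, dotProduct_comm]

/-- A δ-spectral approximation is a 2δ-preconditioner: if `A` is symmetric positive
definite, `δ ∈ (0,1/2)`, and `P` is symmetric with `(1−δ)A ⪯ P ⪯ (1+δ)A`, then `P`
is positive definite and `‖P⁻¹Ax − x‖_A ≤ 2δ‖x‖_A` for all `x`. -/
theorem spectral_approx_preconditioner {n : ℕ} (A P : Matrix (Fin n) (Fin n) ℝ)
    (hA : A.PosDef) (δ : ℝ) (hδ : 0 < δ) (hδ' : δ < 1 / 2) (hP : P.IsSymm)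
    (h₁ : PSDle ((1 - δ) • A) P) (h₂ : PSDle P ((1 + δ) • A)) :
    P.PosDef ∧ ∀ x : Fin n → ℝ,
      mnorm A (P⁻¹.mulVec (A.mulVec x) - x) ≤ 2 * δ * mnorm A x := by
  have hAsymm : A.IsSymm := by
    unfold Matrix.IsSymm
    ext i j
    have := congrFun (congrFun hA.1 i) j
    simpa [conjTranspose_apply] using this
  -- quadratic form bounds
  have hE : ∀ w : Fin n → ℝ, |w ⬝ᵥ (A - P).mulVec w| ≤ δ * (w ⬝ᵥ A.mulVec w) := by
    intro w
    have h1 : (0:ℝ) ≤ w ⬝ᵥ (P - (1 - δ) • A).mulVec w := by simpa using h₁.dotProduct_mulVec_nonneg w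
    have h2 : (0:ℝ) ≤ w ⬝ᵥ ((1 + δ) • A - P).mulVec w := by simpa using h₂.dotProduct_mulVec_nonneg w
    rw [sub_mulVec, dotProduct_sub] at *
    rw [smul_mulVec, dotProduct_smul, smul_eq_mul] at h1 h2
    rw [abs_le]
    constructor <;> nlinarith
  have hAPsymm : (A - P).IsSymm := by
    unfold Matrix.IsSymm at *
    rw [transpose_sub, hAsymm, hP]
  -- quadratic form of A is nonnegative
  have hAq : ∀ w : Fin n → ℝ, 0 ≤ w ⬝ᵥ A.mulVec w := by
    intro w; simpa using hA.posSemidef.dotProduct_mulVec_nonneg w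
  have hApos : ∀ w : Fin n → ℝ, w ≠ 0 → 0 < w ⬝ᵥ A.mulVec w := by
    intro w hw; simpa using hA.dotProduct_mulVec_pos hw
  -- polarization bound
  have hEbound : ∀ u v : Fin n → ℝ,
      u ⬝ᵥ (A - P).mulVec v ≤ δ / 2 * (u ⬝ᵥ A.mulVec u + v ⬝ᵥ A.mulVec v) := by
    intro u v
    have hplus := (abs_le.1 (hE (u + v))).2
    have hminus := (abs_le.1 (hE (u - v))).1
    have expand : ∀ (M : Matrix (Fin n) (Fin n) ℝ), M.IsSymm →
        ((u + v) ⬝ᵥ M.mulVec (u + v) = u ⬝ᵥ M.mulVec u + 2 * (u ⬝ᵥ M.mulVec v)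
            + v ⬝ᵥ M.mulVec v) ∧
        ((u - v) ⬝ᵥ M.mulVec (u - v) = u ⬝ᵥ M.mulVec u - 2 * (u ⬝ᵥ M.mulVec v)
            + v ⬝ᵥ M.mulVec v) := by
      intro M hM
      have hsy := symm_dot hM v u
      constructor
      · rw [mulVec_add, dotProduct_add, add_dotProduct, add_dotProduct]; linarith
      · rw [mulVec_sub, dotProduct_sub, sub_dotProduct, sub_dotProduct]; linarith
    obtain ⟨e1, e2⟩ := expand (A - P) hAPsymm
    obtain ⟨a1, a2⟩ := expand A hAsymm
    rw [e1, a1] at hplus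
    rw [e2, a2] at hminus
    linarith
  -- Cauchy–Schwarz style bound
  have hCS : ∀ u v : Fin n → ℝ,
      u ⬝ᵥ (A - P).mulVec v ≤ δ * mnorm A u * mnorm A v := by
    intro u v
    by_cases hu : u = 0
    · subst hu
      simp [mnorm, mul_nonneg, Real.sqrt_nonneg,
        mul_nonneg (mul_nonneg hδ.le (Real.sqrt_nonneg _)) (Real.sqrt_nonneg _)]
    by_cases hv : v = 0
    · subst hv
      simp [mnorm]
    set a := mnorm A u with ha
    set b := mnorm A v with hb
    have hqu := hApos u hu
    have hqv := hApos v hv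
    have hapos : 0 < a := Real.sqrt_pos.2 hqu
    have hbpos : 0 < b := Real.sqrt_pos.2 hqv
    have ha2 : a ^ 2 = u ⬝ᵥ A.mulVec u := Real.sq_sqrt (hAq u)
    have hb2 : b ^ 2 = v ⬝ᵥ A.mulVec v := Real.sq_sqrt (hAq v)
    set c : ℝ := Real.sqrt (b / a) with hc
    have hcpos : 0 < c := Real.sqrt_pos.2 (div_pos hbpos hapos)
    have hc2 : c ^ 2 = b / a := Real.sq_sqrt (div_pos hbpos hapos).le
    have key := hEbound (c • u) (c⁻¹ • v)
    simp only [mulVec_smul, dotProduct_smul, smul_dotProduct, smul_eq_mul] at key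
    have hcc : c⁻¹ * (c * (u ⬝ᵥ (A - P).mulVec v)) = u ⬝ᵥ (A - P).mulVec v := by
      field_simp
    rw [hcc] at key
    have : δ / 2 * (c * (c * (u ⬝ᵥ A.mulVec u)) + c⁻¹ * (c⁻¹ * (v ⬝ᵥ A.mulVec v)))
        = δ * a * b := by
      rw [← ha2, ← hb2]
      have h1 : c * (c * a ^ 2) = a * b := by
        have : c * c = b / a := by nlinarith
        rw [← mul_assoc, this]; field_simp
      have h2 : c⁻¹ * (c⁻¹ * b ^ 2) = a * b := by
        have hcc2 : c * c = b / a := by nlinarith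
        have : c⁻¹ * c⁻¹ = a / b := by
          rw [← mul_inv, hcc2]
          rw [inv_div]
        rw [← mul_assoc, this]; field_simp
      rw [h1, h2]; ring
    rw [this] at key
    exact key
  -- P is positive definite
  have hPpd : P.PosDef := by
    refine PosDef.of_dotProduct_mulVec_pos (isSymm_to_isHermitian hP) fun x hx => ?_
    have h1 : (0:ℝ) ≤ x ⬝ᵥ (P - (1 - δ) • A).mulVec x := by simpa using h₁.dotProduct_mulVec_nonneg x
    rw [sub_mulVec, dotProduct_sub, smul_mulVec, dotProduct_smul, smul_eq_mul] at h1
    have hq := hApos x hx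
    simpa using show (0:ℝ) < x ⬝ᵥ P.mulVec x by nlinarith
  refine ⟨hPpd, fun x => ?_⟩
  by_cases hx : x = 0
  · subst hx
    simp [mnorm]
  set y := P⁻¹.mulVec (A.mulVec x) - x with hy
  have hdet : IsUnit P.det := isUnit_iff_ne_zero.2 hPpd.det_pos.ne'
  have hPy : P.mulVec y = A.mulVec x - P.mulVec x := by
    rw [hy, mulVec_sub, mulVec_mulVec, Matrix.mul_nonsing_inv P hdet, one_mulVec]
  have hAy : A.mulVec y = (A - P).mulVec y + (A - P).mulVec x := by
    rw [sub_mulVec, sub_mulVec, hPy]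
    abel
  set a := mnorm A y with ha
  set b := mnorm A x with hb
  have ha2 : a ^ 2 = y ⬝ᵥ A.mulVec y := Real.sq_sqrt (hAq y)
  have hbpos : 0 < b := Real.sqrt_pos.2 (hApos x hx)
  have hanon : 0 ≤ a := Real.sqrt_nonneg _
  have key : a ^ 2 ≤ δ * a * a + δ * a * b := by
    rw [ha2, hAy, dotProduct_add]
    have c1 := hCS y y
    have c2 := hCS y x
    rw [← ha] at c1 c2
    rw [← hb] at c2
    nlinarith
  by_contra hcon
  push_neg at hcon
  have hapos : 0 < a := lt_trans (by positivity) hcon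
  nlinarith [key, mul_pos hapos hapos, mul_lt_mul_of_pos_left hcon hapos]
end

section
/- Let L_G be the Laplacian of a weighted graph G, D ≻ 0 a diagonal matrix, and A = L_G + D. If H is a δ-spectral sparsifier of G with δ ∈ (0, 1/2), then P := L_H + D is positive definite and satisfies ‖P⁻¹Ax − x‖_A ≤ 2δ‖x‖_A for all x ∈ ℝⁿ. -/
open Matrix

/-- Symmetry of the bilinear form attached to a real symmetric matrix. -/
lemma bilin_symm {n : ℕ} {E : Matrix (Fin n) (Fin n) ℝ} (hE : Eᵀ = E) (y x : Fin n → ℝ) :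
    y ⬝ᵥ E.mulVec x = x ⬝ᵥ E.mulVec y := by
  rw [dotProduct_mulVec, ← mulVec_transpose, hE, dotProduct_comm]

/-- Unscaled polarization bound. -/
lemma bilin_polar {n : ℕ} {A E : Matrix (Fin n) (Fin n) ℝ} (hE : Eᵀ = E) {δ : ℝ}
    (hbound : ∀ z, |z ⬝ᵥ E.mulVec z| ≤ δ * (z ⬝ᵥ A.mulVec z)) (y x : Fin n → ℝ) :
    |y ⬝ᵥ E.mulVec x| ≤ δ / 2 * (y ⬝ᵥ A.mulVec y + x ⬝ᵥ A.mulVec x) := by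
  have h1 := hbound (y + x)
  have h2 := hbound (y - x)
  have hsym := bilin_symm hE y x
  have e1 : (y + x) ⬝ᵥ E.mulVec (y + x)
      = y ⬝ᵥ E.mulVec y + 2 * (y ⬝ᵥ E.mulVec x) + x ⬝ᵥ E.mulVec x := by
    simp only [add_mulVec, mulVec_add, dotProduct_add, add_dotProduct]
    rw [← hsym]; ring
  have e2 : (y - x) ⬝ᵥ E.mulVec (y - x)
      = y ⬝ᵥ E.mulVec y - 2 * (y ⬝ᵥ E.mulVec x) + x ⬝ᵥ E.mulVec x := by
    simp only [sub_mulVec, mulVec_sub, dotProduct_sub, sub_dotProduct]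
    rw [← hsym]; ring
  have e3 : (y + x) ⬝ᵥ A.mulVec (y + x) + (y - x) ⬝ᵥ A.mulVec (y - x)
      = 2 * (y ⬝ᵥ A.mulVec y) + 2 * (x ⬝ᵥ A.mulVec x) := by
    simp only [add_mulVec, mulVec_add, dotProduct_add, add_dotProduct, sub_mulVec, mulVec_sub,
      dotProduct_sub, sub_dotProduct]
    ring
  have key : y ⬝ᵥ E.mulVec x
      = ((y + x) ⬝ᵥ E.mulVec (y + x) - (y - x) ⬝ᵥ E.mulVec (y - x)) / 4 := by
    rw [e1, e2]; ring
  rw [key]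
  have := abs_sub (((y + x) ⬝ᵥ E.mulVec (y + x))) ((y - x) ⬝ᵥ E.mulVec (y - x))
  calc |((y + x) ⬝ᵥ E.mulVec (y + x) - (y - x) ⬝ᵥ E.mulVec (y - x)) / 4|
      ≤ (|(y + x) ⬝ᵥ E.mulVec (y + x)| + |(y - x) ⬝ᵥ E.mulVec (y - x)|) / 4 := by
        rw [abs_div]
        have h := abs_sub ((y + x) ⬝ᵥ E.mulVec (y + x)) ((y - x) ⬝ᵥ E.mulVec (y - x))
        have : |(4:ℝ)| = 4 := by norm_num
        rw [this]
        linarith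
    _ ≤ (δ * ((y + x) ⬝ᵥ A.mulVec (y + x)) + δ * ((y - x) ⬝ᵥ A.mulVec (y - x))) / 4 := by
        gcongr
    _ = δ / 2 * (y ⬝ᵥ A.mulVec y + x ⬝ᵥ A.mulVec x) := by
        rw [← mul_add, e3]; ring

/-- If `A = L_G + D` with `L_G` a (PSD) graph Laplacian, `D ≻ 0` diagonal, and `L_H`
is the Laplacian of a δ-spectral sparsifier of `G` with `δ ∈ (0,1/2)`, then
`P := L_H + D` is positive definite and `‖P⁻¹Ax − x‖_A ≤ 2δ‖x‖_A` for all `x`. -/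
theorem sparsifier_preconditioner {n : ℕ} (LG LH : Matrix (Fin n) (Fin n) ℝ)
    (hLG : LG.PosSemidef) (hLH : LH.PosSemidef)
    (d : Fin n → ℝ) (hd : ∀ i, 0 < d i)
    (δ : ℝ) (hδ : 0 < δ) (hδ' : δ < 1 / 2)
    (hsparse : ∀ x : Fin n → ℝ,
      (1 - δ) * (x ⬝ᵥ LG.mulVec x) ≤ x ⬝ᵥ LH.mulVec x ∧
        x ⬝ᵥ LH.mulVec x ≤ (1 + δ) * (x ⬝ᵥ LG.mulVec x))
    (A P : Matrix (Fin n) (Fin n) ℝ)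
    (hA : A = LG + Matrix.diagonal d) (hPdef : P = LH + Matrix.diagonal d) :
    P.PosDef ∧ ∀ x : Fin n → ℝ,
      mnorm A (P⁻¹.mulVec (A.mulVec x) - x) ≤ 2 * δ * mnorm A x := by
  have hD : (Matrix.diagonal d).PosDef := Matrix.PosDef.diagonal hd
  have hPpd : P.PosDef := by rw [hPdef]; exact Matrix.PosDef.posSemidef_add hLH hD
  have hApd : A.PosDef := by rw [hA]; exact Matrix.PosDef.posSemidef_add hLG hD
  refine ⟨hPpd, fun x => ?_⟩
  -- quadratic form comparison
  have hqD : ∀ z : Fin n → ℝ, 0 ≤ z ⬝ᵥ (Matrix.diagonal d).mulVec z := fun z => by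
    simpa using hD.posSemidef.dotProduct_mulVec_nonneg z
  have hqG : ∀ z : Fin n → ℝ, 0 ≤ z ⬝ᵥ LG.mulVec z := fun z => by simpa using hLG.dotProduct_mulVec_nonneg z
  have hlow : ∀ z : Fin n → ℝ, (1 - δ) * (z ⬝ᵥ A.mulVec z) ≤ z ⬝ᵥ P.mulVec z := by
    intro z
    rw [hA, hPdef]
    simp only [Matrix.add_mulVec, dotProduct_add]
    have h1 := (hsparse z).1
    nlinarith [hqD z, hqG z]
  have hupp : ∀ z : Fin n → ℝ, z ⬝ᵥ P.mulVec z ≤ (1 + δ) * (z ⬝ᵥ A.mulVec z) := by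
    intro z
    rw [hA, hPdef]
    simp only [Matrix.add_mulVec, dotProduct_add]
    have h2 := (hsparse z).2
    nlinarith [hqD z, hqG z]
  set E : Matrix (Fin n) (Fin n) ℝ := P - A with hE
  have hEsymm : Eᵀ = E := by
    have h1 : Pᵀ = P := by
      rw [← conjTranspose_eq_transpose_of_trivial]; exact hPpd.isHermitian
    have h2 : Aᵀ = A := by
      rw [← conjTranspose_eq_transpose_of_trivial]; exact hApd.isHermitian
    rw [hE, transpose_sub, h1, h2]
  have hEbound : ∀ z, |z ⬝ᵥ E.mulVec z| ≤ δ * (z ⬝ᵥ A.mulVec z) := by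
    intro z
    rw [abs_le]
    have h1 := hlow z
    have h2 := hupp z
    constructor <;>
      · simp only [hE, Matrix.sub_mulVec, dotProduct_sub]
        nlinarith
  set y : Fin n → ℝ := P⁻¹.mulVec (A.mulVec x) - x with hy
  have hPy : P.mulVec y = (A - P).mulVec x := by
    rw [hy, Matrix.mulVec_sub, Matrix.mulVec_mulVec, Matrix.mul_nonsing_inv _
      (isUnit_iff_ne_zero.mpr hPpd.det_pos.ne'), Matrix.one_mulVec, Matrix.sub_mulVec]
  set X := Real.sqrt (x ⬝ᵥ A.mulVec x) with hX
  set Y := Real.sqrt (y ⬝ᵥ A.mulVec y) with hY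
  have hXnn : 0 ≤ X := Real.sqrt_nonneg _
  have hYnn : 0 ≤ Y := Real.sqrt_nonneg _
  have hqAx : 0 ≤ x ⬝ᵥ A.mulVec x := by simpa using hApd.posSemidef.dotProduct_mulVec_nonneg x
  have hqAy : 0 ≤ y ⬝ᵥ A.mulVec y := by simpa using hApd.posSemidef.dotProduct_mulVec_nonneg y
  have hX2 : X ^ 2 = x ⬝ᵥ A.mulVec x := Real.sq_sqrt hqAx
  have hY2 : Y ^ 2 = y ⬝ᵥ A.mulVec y := Real.sq_sqrt hqAy
  show Y ≤ 2 * δ * X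
  rcases eq_or_lt_of_le hYnn with h0 | hYpos
  · rw [← h0]; positivity
  · -- X > 0 : otherwise x = 0 and then y = 0
    have hXpos : 0 < X := by
      rcases eq_or_lt_of_le hXnn with h0 | h
      · exfalso
        have hx0 : x ⬝ᵥ A.mulVec x = 0 := by rw [← hX2, ← h0]; ring
        have hxz : x = 0 := by
          by_contra hne
          have := hApd.dotProduct_mulVec_pos hne
          simp only [star_trivial] at this
          linarith
        have : y = 0 := by rw [hy, hxz]; simp
        rw [hY, this] at hYpos
        simp at hYpos
      · exact h
    -- the key chain
    have hkey : (1 - δ) * Y ^ 2 ≤ δ * X * Y := by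
      have h1 : (1 - δ) * (y ⬝ᵥ A.mulVec y) ≤ y ⬝ᵥ P.mulVec y := hlow y
      have h2 : y ⬝ᵥ P.mulVec y = -(y ⬝ᵥ E.mulVec x) := by
        rw [hPy, hE]
        simp only [Matrix.sub_mulVec, dotProduct_sub]
        ring
      have h3 : |y ⬝ᵥ E.mulVec x| ≤ δ * X * Y := by
        -- scaled polarization with t² = X/Y
        have ht : 0 < X / Y := div_pos hXpos hYpos
        set t := Real.sqrt (X / Y) with htdef
        have htpos : 0 < t := Real.sqrt_pos.mpr ht
        have ht2 : t ^ 2 = X / Y := Real.sq_sqrt ht.le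
        have hscale : y ⬝ᵥ E.mulVec x = (t • y) ⬝ᵥ E.mulVec (t⁻¹ • x) := by
          rw [Matrix.mulVec_smul, smul_dotProduct, dotProduct_smul]
          field_simp
          rw [smul_smul, mul_one_div_cancel htpos.ne', one_smul]
        have hpol := bilin_polar hEsymm hEbound (t • y) (t⁻¹ • x)
        have hq1 : (t • y) ⬝ᵥ A.mulVec (t • y) = t ^ 2 * (y ⬝ᵥ A.mulVec y) := by
          rw [Matrix.mulVec_smul, smul_dotProduct, dotProduct_smul]
          simp [smul_eq_mul]; ring
        have hq2 : (t⁻¹ • x) ⬝ᵥ A.mulVec (t⁻¹ • x) = (t ^ 2)⁻¹ * (x ⬝ᵥ A.mulVec x) := by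
          rw [Matrix.mulVec_smul, smul_dotProduct, dotProduct_smul]
          simp [smul_eq_mul]; ring
        rw [hscale]
        calc |(t • y) ⬝ᵥ E.mulVec (t⁻¹ • x)|
            ≤ δ / 2 * ((t • y) ⬝ᵥ A.mulVec (t • y) + (t⁻¹ • x) ⬝ᵥ A.mulVec (t⁻¹ • x)) := hpol
          _ = δ / 2 * (X / Y * Y ^ 2 + Y / X * X ^ 2) := by
              rw [hq1, hq2, ht2, hX2, hY2, inv_div]
          _ = δ * X * Y := by
              field_simp
              ring
      calc (1 - δ) * Y ^ 2 ≤ y ⬝ᵥ P.mulVec y := by rw [hY2]; exact h1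
        _ = -(y ⬝ᵥ E.mulVec x) := h2
        _ ≤ |y ⬝ᵥ E.mulVec x| := neg_le_abs _
        _ ≤ δ * X * Y := h3
    -- conclude
    have h1δ : (1 : ℝ) / 2 < 1 - δ := by linarith
    nlinarith [hYpos, hXpos]
end
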